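/- arXiv:1304.6179 — 3 statements merged into one kernel-verified Lean document; each statement's English description precedes it below -/
import Mathlib

section
/- Let p > 3 be prime, ζ a primitive p-th root of unity, q a prime ideal of ℤ[ζ] coprime to p, and x, y integers coprime to the rational prime under q such that xζ ≡ y mod q and x + y is a p-th power of an integer. Then for 1 ≤ k ≤ p-2, the p-th power residue symbol satisfies ((x + ζ^k y)/q)_K = ((ζ^{k/2})/q)_K · ((ε_{k+1})/q)_K, where ε_{k+1} = ζ^((1-(k+1))/2)·(1+ζ^{k+1})/(1+ζ) and half-exponents are taken modulo p. -/
open NumberField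

/-- The exponent `m` with `2*m ≡ a (mod p)`, i.e. `ζ^(a/2)` means `ζ^(halfOf p a)`. -/
def halfOf (p : ℕ) (a : ℤ) : ℕ := (((a : ℤ) : ZMod p) * (2 : ZMod p)⁻¹).val

/-- Equality of `p`-th power residue symbols at the prime ideal `q`, encoded via the defining
congruence `α^((N(q)-1)/p) ≡ β^((N(q)-1)/p) (mod q)`. -/
def powResEq {R : Type*} [CommRing R] [IsDedekindDomain R] [Module.Free ℤ R] [Module.Finite ℤ R]
    (q : Ideal R) (p : ℕ) (α β : R) : Prop :=
  α ^ ((Ideal.absNorm q - 1) / p) - β ^ ((Ideal.absNorm q - 1) / p) ∈ q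

set_option synthInstance.maxHeartbeats 1000000 in
set_option maxHeartbeats 4000000 in
/-- `(x + ζ^k y / q) = (ζ^{k/2} / q) · (ε_{k+1} / q)` with
`ε_{k+1} = ζ^((1-(k+1))/2)·(1+ζ^{k+1})/(1+ζ)`; since the residue symbol is multiplicative and
`1 + ζ` is coprime to `q`, this is encoded by clearing the denominator `1 + ζ`. -/
theorem symbol_x_add_zeta_pow_y (p : ℕ) (hp : p.Prime) (hp3 : 3 < p)
    (K : Type*) [Field K] [NumberField K]
    (hK : IsCyclotomicExtension {p} ℚ K)
    (ζ : 𝓞 K) (hζ : IsPrimitiveRoot ζ p)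
    (q : Ideal (𝓞 K)) (hq : q.IsPrime) (hq0 : q ≠ ⊥) (hqp : (p : 𝓞 K) ∉ q)
    (x y : ℤ) (hx : (x : 𝓞 K) ∉ q) (hy : (y : 𝓞 K) ∉ q)
    (hdvd : (x : 𝓞 K) * ζ - (y : 𝓞 K) ∈ q)
    (c : ℤ) (hc : x + y = c ^ p) (hcq : (c : 𝓞 K) ∉ q) :
    ∀ k : ℕ, 1 ≤ k → k ≤ p - 2 →
      powResEq q p (((x : 𝓞 K) + ζ ^ k * (y : 𝓞 K)) * (1 + ζ))
        (ζ ^ halfOf p (k : ℤ) * (ζ ^ halfOf p (1 - ((k : ℤ) + 1)) * (1 + ζ ^ (k + 1)))) := by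
  intro k _ _
  haveI : NeZero p := ⟨hp.ne_zero⟩
  haveI hqmax : q.IsMaximal := hq.isMaximal hq0
  letI : Fintype (𝓞 K ⧸ q) := @Fintype.ofFinite _ (Ideal.finiteQuotientOfFreeOfNeBot q hq0)
  letI : Field (𝓞 K ⧸ q) := Ideal.Quotient.field q
  set π := Ideal.Quotient.mk q with hπ
  have hzp : ζ ^ p = 1 := hζ.pow_eq_one
  -- The two half-power factors cancel exactly.
  have hbeta : ζ ^ halfOf p (k : ℤ) * ζ ^ halfOf p (1 - ((k : ℤ) + 1)) = 1 := by
    rw [← pow_add]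
    have hdv : p ∣ halfOf p (k : ℤ) + halfOf p (1 - ((k : ℤ) + 1)) := by
      rw [← ZMod.natCast_eq_zero_iff]
      push_cast
      unfold halfOf
      rw [ZMod.natCast_zmod_val, ZMod.natCast_zmod_val]
      push_cast
      ring
    obtain ⟨t, ht⟩ := hdv
    rw [ht, pow_mul, hzp, one_pow]
  have hβ : ζ ^ halfOf p (k : ℤ) * (ζ ^ halfOf p (1 - ((k : ℤ) + 1)) * (1 + ζ ^ (k + 1)))
      = 1 + ζ ^ (k + 1) := by rw [← mul_assoc, hbeta, one_mul]
  -- ζ maps to a primitive p-th root in the residue field.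
  have hzp' : π ζ ^ p = 1 := by rw [← map_pow, hzp, map_one]
  have hz1 : π ζ ≠ 1 := by
    intro h
    apply hqp
    have hg : π (∑ i ∈ Finset.range p, ζ ^ i) = 0 := by
      rw [hζ.geom_sum_eq_zero (by omega), map_zero]
    rw [map_sum] at hg
    simp only [map_pow, h, one_pow] at hg
    rw [Finset.sum_const, Finset.card_range, nsmul_eq_mul, mul_one] at hg
    rwa [← map_natCast π p, Ideal.Quotient.eq_zero_iff_mem] at hg
  have hz0 : π ζ ≠ 0 := by
    intro h
    rw [h, zero_pow hp.ne_zero] at hzp'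
    exact zero_ne_one hzp'
  have hord : orderOf (π ζ) = p := by
    have h1 : orderOf (π ζ) ∣ p := orderOf_dvd_of_pow_eq_one hzp'
    rcases hp.eq_one_or_self_of_dvd _ h1 with h | h
    · exact absurd (orderOf_eq_one_iff.mp h) hz1
    · exact h
  have hferm0 : π ζ ^ (Fintype.card (𝓞 K ⧸ q) - 1) = 1 :=
    FiniteField.pow_card_sub_one_eq_one (π ζ) hz0
  have hpdvd : p ∣ Fintype.card (𝓞 K ⧸ q) - 1 := by
    rw [← hord]
    exact orderOf_dvd_of_pow_eq_one hferm0
  have hN : Ideal.absNorm q = Fintype.card (𝓞 K ⧸ q) := by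
    rw [Ideal.absNorm_apply, Submodule.cardQuot_apply, Nat.card_eq_fintype_card]
  -- the main congruence
  unfold powResEq
  rw [← Ideal.Quotient.eq, ← hπ, map_pow, map_pow, hβ]
  have hyx : π ((y : ℤ) : 𝓞 K) = π ((x : ℤ) : 𝓞 K) * π ζ := by
    have h := (Ideal.Quotient.eq (I := q)).mpr hdvd
    rw [map_mul] at h
    exact h.symm
  have hcp : π ((x : ℤ) : 𝓞 K) * (1 + π ζ) = π ((c : ℤ) : 𝓞 K) ^ p := by
    have hxy : ((x : ℤ) : 𝓞 K) + ((y : ℤ) : 𝓞 K) = ((c : ℤ) : 𝓞 K) ^ p := by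
      have h' : ((x + y : ℤ) : 𝓞 K) = ((c ^ p : ℤ) : 𝓞 K) := by rw [hc]
      push_cast at h'
      exact h'
    calc π ((x : ℤ) : 𝓞 K) * (1 + π ζ)
        = π ((x : ℤ) : 𝓞 K) + π ((x : ℤ) : 𝓞 K) * π ζ := by ring
      _ = π ((x : ℤ) : 𝓞 K) + π ((y : ℤ) : 𝓞 K) := by rw [hyx]
      _ = π (((x : ℤ) : 𝓞 K) + ((y : ℤ) : 𝓞 K)) := by rw [map_add]
      _ = π ((c : ℤ) : 𝓞 K) ^ p := by rw [hxy, map_pow]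
  have hmain : π (((x : ℤ) : 𝓞 K) + ζ ^ k * ((y : ℤ) : 𝓞 K)) * π (1 + ζ)
      = π ((c : ℤ) : 𝓞 K) ^ p * π (1 + ζ ^ (k + 1)) := by
    simp only [map_add, map_mul, map_pow, map_one]
    rw [hyx, ← hcp]
    ring
  have hc0 : π ((c : ℤ) : 𝓞 K) ≠ 0 := fun h => hcq (Ideal.Quotient.eq_zero_iff_mem.mp h)
  have hcard : p * ((Ideal.absNorm q - 1) / p) = Fintype.card (𝓞 K ⧸ q) - 1 := by
    rw [hN]
    exact Nat.mul_div_cancel' hpdvd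
  have hferm : π ((c : ℤ) : 𝓞 K) ^ (Fintype.card (𝓞 K ⧸ q) - 1) = 1 :=
    FiniteField.pow_card_sub_one_eq_one _ hc0
  rw [map_mul, hmain, mul_pow, ← pow_mul, hcard, hferm, one_mul]
end

section
/- Let p > 3 be prime, ζ a primitive p-th root of unity, q a prime ideal of ℤ[ζ] coprime to p lying over a rational prime q ≡ 1 mod p², and x, y integers coprime to q such that xζ ≡ -y mod q and x + y is a p-th power of an integer. Then for 1 ≤ k ≤ p-2, ((x + ζ^k y)/q)_K = (ϖ_{k+1}/q)_K, where ϖ_{k+1} = ζ^((1-(k+1))/2)·(1-ζ^{k+1})/(1-ζ). -/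
open NumberField

set_option maxHeartbeats 2000000 in
set_option synthInstance.maxHeartbeats 1000000 in
/-- `(x + ζ^k y / q) = (ϖ_{k+1} / q)` with `ϖ_{k+1} = ζ^((1-(k+1))/2)·(1-ζ^{k+1})/(1-ζ)`;
since the residue symbol is multiplicative, this is encoded by clearing the denominator `1 - ζ`
(the factor `ζ^{k/2}` has trivial symbol since the residue characteristic is `≡ 1 mod p²`). -/
theorem symbol_x_add_zeta_pow_y_varpi (p : ℕ) (hp : p.Prime) (hp3 : 3 < p)
    (K : Type*) [Field K] [NumberField K]
    (hK : IsCyclotomicExtension {p} ℚ K)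
    (ζ : 𝓞 K) (hζ : IsPrimitiveRoot ζ p)
    (q : Ideal (𝓞 K)) (hq : q.IsPrime) (hq0 : q ≠ ⊥) (hqp : (p : 𝓞 K) ∉ q)
    (l : ℕ) (hl : l.Prime) (hlq : (l : 𝓞 K) ∈ q) (hl1 : l % p ^ 2 = 1)
    (x y : ℤ) (hx : ¬ (l : ℤ) ∣ x) (hy : ¬ (l : ℤ) ∣ y)
    (hdvd : (x : 𝓞 K) * ζ + (y : 𝓞 K) ∈ q)
    (c : ℤ) (hc : x + y = c ^ p) :
    ∀ k : ℕ, 1 ≤ k → k ≤ p - 2 →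
      powResEq q p (((x : 𝓞 K) + ζ ^ k * (y : 𝓞 K)) * (1 - ζ))
        (ζ ^ halfOf p (1 - ((k : ℤ) + 1)) * (1 - ζ ^ (k + 1))) := by
  intro k _hk1 _hk2
  classical
  haveI hqmax : q.IsMaximal := hq.isMaximal hq0
  letI instF : Field (𝓞 K ⧸ q) := Ideal.Quotient.field q
  letI instFin : Fintype (𝓞 K ⧸ q) := @Fintype.ofFinite _ (Ideal.finiteQuotientOfFreeOfNeBot q hq0)
  let π : 𝓞 K →+* 𝓞 K ⧸ q := Ideal.Quotient.mk q
  -- integers in q are divisible by l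
  have hint : ∀ m : ℤ, (m : 𝓞 K) ∈ q → (l : ℤ) ∣ m := by
    intro m hm
    have hlZ : Prime ((l : ℤ)) := (Int.prime_iff_natAbs_prime.mpr (by simpa using hl))
    have hmax : (Ideal.span {(l : ℤ)}).IsMaximal :=
      PrincipalIdealRing.isMaximal_of_irreducible hlZ.irreducible
    set J := q.comap (algebraMap ℤ (𝓞 K)) with hJ
    have hlJ : (l : ℤ) ∈ J := by
      rw [hJ, Ideal.mem_comap]
      simpa using hlq
    have hle : Ideal.span {(l : ℤ)} ≤ J := (Ideal.span_singleton_le_iff_mem _).mpr hlJ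
    have hJtop : J ≠ ⊤ := by
      intro h
      have h1 : (1 : ℤ) ∈ J := h ▸ Submodule.mem_top
      rw [hJ, Ideal.mem_comap, map_one] at h1
      exact hq.ne_top ((Ideal.eq_top_iff_one q).mpr h1)
    have hEq : Ideal.span {(l : ℤ)} = J := hmax.eq_of_le hJtop hle
    have hmJ : m ∈ J := by rw [hJ, Ideal.mem_comap]; simpa using hm
    rw [← hEq, Ideal.mem_span_singleton] at hmJ
    exact hmJ
  have hXne : π (x : 𝓞 K) ≠ 0 := by
    intro h
    exact hx (hint x ((Ideal.Quotient.eq_zero_iff_mem).mp h))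
  have hZ1 : π ζ ≠ 1 := by
    intro h
    have hsum : (∑ i ∈ Finset.range p, ζ ^ i) = 0 :=
      hζ.geom_sum_eq_zero hp.one_lt
    have h2 : (∑ i ∈ Finset.range p, (π ζ) ^ i) = (0 : 𝓞 K ⧸ q) := by
      have h3 := congrArg π hsum
      rw [map_sum] at h3
      simpa [map_pow] using h3
    rw [h] at h2
    simp only [one_pow, Finset.sum_const, Finset.card_range, nsmul_eq_mul, mul_one] at h2
    have hp0 : (p : 𝓞 K) ∈ q := by
      rw [← Ideal.Quotient.eq_zero_iff_mem]
      rw [map_natCast]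
      exact h2
    exact hqp hp0
  have hY : π (y : 𝓞 K) = -(π (x : 𝓞 K) * π ζ) := by
    have h0 : π ((x : 𝓞 K) * ζ + (y : 𝓞 K)) = 0 := Ideal.Quotient.eq_zero_iff_mem.mpr hdvd
    rw [map_add, map_mul] at h0
    linear_combination h0
  have hxyc : (x : 𝓞 K) + (y : 𝓞 K) = ((c : 𝓞 K)) ^ p := by
    have h4 := congrArg (fun z : ℤ => (z : 𝓞 K)) hc
    push_cast at h4
    exact h4
  have hCne : π (c : 𝓞 K) ≠ 0 := by
    intro h
    have h0 : π (x : 𝓞 K) + π (y : 𝓞 K) = 0 := by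
      rw [← map_add, hxyc, map_pow, h, zero_pow hp.pos.ne']
    rw [hY] at h0
    have h5 : π (x : 𝓞 K) * (1 - π ζ) = 0 := by linear_combination h0
    rcases mul_eq_zero.mp h5 with h1 | h1
    · exact hXne h1
    · exact hZ1 (by linear_combination -h1)
  -- characteristic
  have hlF : ((l : ℕ) : 𝓞 K ⧸ q) = 0 := by
    rw [← map_natCast π, Ideal.Quotient.eq_zero_iff_mem]
    exact hlq
  haveI : CharP (𝓞 K ⧸ q) (ringChar (𝓞 K ⧸ q)) := ringChar.charP _
  have hdvdl : ringChar (𝓞 K ⧸ q) ∣ l := ringChar.dvd hlF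
  have hchar : ringChar (𝓞 K ⧸ q) = l := by
    rcases (Nat.Prime.eq_one_or_self_of_dvd hl _ hdvdl) with h1 | h1
    · exact absurd h1 (CharP.char_ne_one (𝓞 K ⧸ q) _)
    · exact h1
  haveI : CharP (𝓞 K ⧸ q) l := ringChar.of_eq hchar
  obtain ⟨n, -, hcard⟩ := FiniteField.card (𝓞 K ⧸ q) l
  have hNcard : Ideal.absNorm q = Fintype.card (𝓞 K ⧸ q) := by
    rw [Ideal.absNorm_apply, Submodule.cardQuot_apply, Nat.card_eq_fintype_card]
  -- divisibility of card - 1 by p^2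
  have hp2l : p ^ 2 ∣ l - 1 := by
    have h6 := Nat.div_add_mod l (p ^ 2)
    rw [hl1] at h6
    exact ⟨l / p ^ 2, by omega⟩
  have hp2N : p ^ 2 ∣ Fintype.card (𝓞 K ⧸ q) - 1 := by
    rw [hcard]
    exact dvd_trans hp2l (by simpa using Nat.sub_dvd_pow_sub_pow l 1 n)
  obtain ⟨m, hm⟩ := hp2N
  have hN1 : 1 ≤ Fintype.card (𝓞 K ⧸ q) := Fintype.card_pos
  have he : (Ideal.absNorm q - 1) / p = p * m := by
    rw [hNcard, hm, pow_two, mul_assoc, Nat.mul_div_cancel_left _ hp.pos]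
  have hpe : p * (p * m) = Fintype.card (𝓞 K ⧸ q) - 1 := by
    rw [hm, pow_two, mul_assoc]
  have hζe : ζ ^ (p * m) = 1 := by
    rw [pow_mul, hζ.pow_eq_one, one_pow]
  -- main computation
  show _ - _ ∈ q
  rw [← Ideal.Quotient.eq, he]
  show π _ = π _
  simp only [map_pow, map_mul, map_sub, map_add, map_one]
  have hcp : π (x : 𝓞 K) * (1 - π ζ) = (π (c : 𝓞 K)) ^ p := by
    have h7 : π (x : 𝓞 K) + π (y : 𝓞 K) = (π (c : 𝓞 K)) ^ p := by
      rw [← map_pow, ← map_add, hxyc]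
    rw [hY] at h7
    linear_combination h7
  have hfact : (π (x : 𝓞 K) + (π ζ) ^ k * π (y : 𝓞 K)) * (1 - π ζ)
      = (π (x : 𝓞 K) * (1 - π ζ)) * (1 - (π ζ) ^ (k + 1)) := by
    rw [hY]; ring
  have hZe : (π ζ) ^ (p * m) = 1 := by
    rw [← map_pow, hζe, map_one]
  calc ((π (x : 𝓞 K) + (π ζ) ^ k * π (y : 𝓞 K)) * (1 - π ζ)) ^ (p * m)
      = ((π (c : 𝓞 K)) ^ p) ^ (p * m) * (1 - (π ζ) ^ (k + 1)) ^ (p * m) := by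
        rw [hfact, mul_pow, hcp]
    _ = (1 - (π ζ) ^ (k + 1)) ^ (p * m) := by
        rw [← pow_mul, hpe, FiniteField.pow_card_sub_one_eq_one _ hCne, one_mul]
    _ = ((π ζ) ^ halfOf p (1 - ((k : ℤ) + 1))) ^ (p * m) * (1 - (π ζ) ^ (k + 1)) ^ (p * m) := by
        have h9 : ((π ζ) ^ halfOf p (1 - ((k : ℤ) + 1))) ^ (p * m)
            = ((π ζ) ^ (p * m)) ^ halfOf p (1 - ((k : ℤ) + 1)) := by
          rw [← pow_mul, ← pow_mul, mul_comm]
        rw [h9, hZe, one_pow, one_mul]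
    _ = ((π ζ) ^ halfOf p (1 - ((k : ℤ) + 1)) * (1 - (π ζ) ^ (k + 1))) ^ (p * m) :=
        (mul_pow _ _ _).symm
end

section
/- Let p be an odd prime and x, y, z pairwise coprime nonzero integers with x^p + y^p + z^p = 0 and p | y (second case of FLT). Then there exist integers y_0, y_1 and ν ≥ 1 with x + z = p^{νp-1} y_0^p, (x^p + z^p)/(x+z) = p·y_1^p, and y = -p^ν y_0 y_1, and moreover there exists an integer z_0 with x + y = z_0^p. -/
private lemma barlow_sum_dvd (a b : ℤ) (n : ℕ) :
    (a + b) ∣ (∑ i ∈ Finset.range n, a ^ i * (-b) ^ (n - 1 - i)) - n * a ^ (n - 1) := by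
  have h : (n : ℤ) * a ^ (n - 1) = ∑ _i ∈ Finset.range n, a ^ (n - 1) := by
    simp [Finset.sum_const, mul_comm]
  rw [h, ← Finset.sum_sub_distrib]
  apply Finset.dvd_sum
  intro i hi
  have hi' : i < n := Finset.mem_range.mp hi
  have hsplit : a ^ (n - 1) = a ^ i * a ^ (n - 1 - i) := by
    rw [← pow_add]; congr 1; omega
  rw [hsplit, ← mul_sub]
  apply dvd_mul_of_dvd_right
  have hd := sub_dvd_pow_sub_pow (-b) a (n - 1 - i)
  have he : -b - a = -(a + b) := by ring
  rwa [he, neg_dvd] at hd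

private lemma barlow_coprime_aux {a b : ℤ}
    (h : ∀ q : ℕ, q.Prime → (q : ℤ) ∣ a → (q : ℤ) ∣ b → False) : IsCoprime a b := by
  rw [Int.isCoprime_iff_gcd_eq_one]
  by_contra hg
  obtain ⟨q, hq, hdvd⟩ := Nat.exists_prime_and_dvd hg
  exact h q hq ((Int.natCast_dvd_natCast.2 hdvd).trans (Int.gcd_dvd_left _ _))
    ((Int.natCast_dvd_natCast.2 hdvd).trans (Int.gcd_dvd_right _ _))

private lemma barlow_pow_of_assoc {d a : ℤ} {p : ℕ} (hpodd : Odd p)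
    (h : Associated (d ^ p) a) : ∃ e : ℤ, a = e ^ p := by
  rcases Int.associated_iff.1 h with h | h
  · exact ⟨d, h.symm⟩
  · exact ⟨-d, by rw [hpodd.neg_pow, h, neg_neg]⟩

theorem barlow_abel_relations (p : ℕ) (hp : p.Prime) (hpodd : Odd p)
    (x y z : ℤ) (hx : x ≠ 0) (hy : y ≠ 0) (hz : z ≠ 0)
    (hxy : IsCoprime x y) (hyz : IsCoprime y z) (hzx : IsCoprime z x)
    (hflt : x ^ p + y ^ p + z ^ p = 0) (hpy : (p : ℤ) ∣ y) :
    ∃ (y0 y1 z0 : ℤ) (ν : ℕ), 1 ≤ ν ∧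
      x + z = (p : ℤ) ^ (ν * p - 1) * y0 ^ p ∧
      x ^ p + z ^ p = (x + z) * ((p : ℤ) * y1 ^ p) ∧
      y = -(p : ℤ) ^ ν * y0 * y1 ∧
      x + y = z0 ^ p := by
  haveI := Fact.mk hp
  have hpZ : Prime (p : ℤ) := Nat.prime_iff_prime_int.mp hp
  have hp3 : 3 ≤ p := by
    have := hp.two_le
    rcases Nat.odd_iff.1 hpodd with h2
    omega
  -- p does not divide x nor z
  have hpx : ¬(p : ℤ) ∣ x := fun h => hpZ.not_unit (hxy.isUnit_of_dvd' h hpy)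
  have hpz : ¬(p : ℤ) ∣ z := fun h => hpZ.not_unit (hyz.isUnit_of_dvd' hpy h)
  -- the geometric sum S with S * (x+z) = x^p + z^p
  set S : ℤ := ∑ i ∈ Finset.range p, x ^ i * (-z) ^ (p - 1 - i) with hSdef
  have hgeom : S * (x + z) = x ^ p + z ^ p := by
    have h := geom_sum₂_mul x (-z) p
    rwa [sub_neg_eq_add, hpodd.neg_pow, sub_neg_eq_add] at h
  have hxzval : x ^ p + z ^ p = -(y ^ p) := by linarith
  have hypne : -(y ^ p) ≠ 0 := by simpa using pow_ne_zero p hy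
  have hszne : x + z ≠ 0 := by
    intro h
    exact hypne (by rw [← hxzval, ← hgeom, h, mul_zero])
  have hSne : S ≠ 0 := by
    intro h
    exact hypne (by rw [← hxzval, ← hgeom, h, zero_mul])
  -- p ∣ x + z
  have hpxz : (p : ℤ) ∣ x + z := by
    have hy0 : ((y : ℤ) : ZMod p) = 0 := (ZMod.intCast_zmod_eq_zero_iff_dvd y p).2 hpy
    have hc := congrArg (fun n : ℤ => (n : ZMod p)) hflt
    push_cast at hc
    rw [ZMod.pow_card, ZMod.pow_card, ZMod.pow_card, hy0] at hc
    refine (ZMod.intCast_zmod_eq_zero_iff_dvd _ p).1 ?_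
    push_cast
    linear_combination hc
  -- multiplicities
  have hfy : FiniteMultiplicity (p : ℤ) y :=
    Int.finiteMultiplicity_iff.2 ⟨by simpa using hp.ne_one, hy⟩
  have hfs : FiniteMultiplicity (p : ℤ) (x + z) :=
    Int.finiteMultiplicity_iff.2 ⟨by simpa using hp.ne_one, hszne⟩
  have hfS : FiniteMultiplicity (p : ℤ) S :=
    Int.finiteMultiplicity_iff.2 ⟨by simpa using hp.ne_one, hSne⟩
  set ν : ℕ := multiplicity (p : ℤ) y with hνdef
  set m : ℕ := multiplicity (p : ℤ) (x + z) with hmdef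
  set k : ℕ := multiplicity (p : ℤ) S with hkdef
  have hν1 : 1 ≤ ν := multiplicity_pos_of_dvd hpy
  have e2 : emultiplicity (p : ℤ) (x ^ p + z ^ p) = ((p * ν : ℕ) : ℕ∞) := by
    rw [hxzval, emultiplicity_neg, emultiplicity_pow hpZ,
      hfy.emultiplicity_eq_multiplicity]
    push_cast
    ring
  have hm1 : m + 1 = p * ν := by
    have e1 := Int.emultiplicity_pow_add_pow hp hpodd hpxz hpx hpodd
    rw [e2, hfs.emultiplicity_eq_multiplicity, Nat.Prime.emultiplicity_self hp] at e1
    exact_mod_cast e1.symm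
  have hk1 : k = 1 := by
    have e4 : emultiplicity (p : ℤ) (S * (x + z)) =
        emultiplicity (p : ℤ) S + emultiplicity (p : ℤ) (x + z) := emultiplicity_mul hpZ
    rw [hgeom, e2, hfS.emultiplicity_eq_multiplicity,
      hfs.emultiplicity_eq_multiplicity] at e4
    have : k + m = p * ν := by exact_mod_cast e4.symm
    omega
  have hm1' : m + 1 = ν * p := by rw [Nat.mul_comm]; exact hm1
  have hm2 : 2 ≤ m := by
    have h3 : 3 * 1 ≤ p * ν := Nat.mul_le_mul hp3 hν1
    omega
  obtain ⟨s', hs', hps'⟩ := hfs.exists_eq_pow_mul_and_not_dvd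
  obtain ⟨t', ht', hpt'⟩ := hfS.exists_eq_pow_mul_and_not_dvd
  obtain ⟨y', hy', hpy'⟩ := hfy.exists_eq_pow_mul_and_not_dvd
  rw [← hmdef] at hs'
  rw [← hkdef, hk1, pow_one] at ht'
  rw [← hνdef] at hy'
  -- a common prime divisor of x+z and S divides p * x^(p-1)
  have hcommon : ∀ q : ℕ, q.Prime → (q : ℤ) ∣ x + z → (q : ℤ) ∣ S →
      (q : ℤ) ∣ (p : ℤ) * x ^ (p - 1) := by
    intro q hq hq1 hq2
    have h3 : (q : ℤ) ∣ S - (p : ℤ) * x ^ (p - 1) := hq1.trans (barlow_sum_dvd x z p)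
    have := dvd_sub hq2 h3
    simpa using this
  -- s' and t' are coprime
  have hcop : IsCoprime s' t' := by
    apply barlow_coprime_aux
    intro q hq hq1 hq2
    have hqZ : Prime (q : ℤ) := Nat.prime_iff_prime_int.mp hq
    have hqs : (q : ℤ) ∣ x + z := hq1.trans ⟨(p : ℤ) ^ m, by rw [hs']; ring⟩
    have hqS : (q : ℤ) ∣ S := hq2.trans ⟨(p : ℤ), by rw [ht']; ring⟩
    rcases hqZ.dvd_mul.1 (hcommon q hq hqs hqS) with h | h
    · have hqp : q = p := (Nat.prime_dvd_prime_iff_eq hq hp).1 (Int.natCast_dvd_natCast.1 h)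
      rw [hqp] at hq1
      exact hps' hq1
    · have hqx : (q : ℤ) ∣ x := hqZ.dvd_of_dvd_pow h
      have hqz : (q : ℤ) ∣ z := (dvd_add_right hqx).mp hqs
      exact hqZ.not_unit (hzx.isUnit_of_dvd' hqz hqx)
  -- the product identity s' * t' = (-y')^p
  have hprod : s' * t' = (-y') ^ p := by
    have hppow : ((p : ℤ)) ^ (p * ν) ≠ 0 := pow_ne_zero _ hpZ.ne_zero
    apply mul_left_cancel₀ hppow
    have hsplit : (p : ℤ) ^ (p * ν) = (p : ℤ) ^ m * (p : ℤ) ^ 1 := by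
      rw [← pow_add]; congr 1; exact hm1.symm
    have hsplit2 : (p : ℤ) ^ (ν * p) = (p : ℤ) ^ m * (p : ℤ) ^ 1 := by
      rw [← pow_add]; congr 1; exact hm1'.symm
    calc (p : ℤ) ^ (p * ν) * (s' * t')
        = ((p : ℤ) ^ m * s') * ((p : ℤ) ^ 1 * t') := by rw [hsplit]; ring
      _ = (x + z) * S := by rw [← hs', pow_one, ← ht']
      _ = x ^ p + z ^ p := by rw [← hgeom]; ring
      _ = -(y ^ p) := hxzval
      _ = -(((p : ℤ) ^ ν * y') ^ p) := by rw [← hy']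
      _ = -((p : ℤ) ^ (ν * p) * y' ^ p) := by rw [mul_pow, ← pow_mul]
      _ = (p : ℤ) ^ (p * ν) * (-y') ^ p := by
          rw [hpodd.neg_pow, hsplit2, hsplit]; ring
  -- extract p-th powers
  obtain ⟨d0, hd0⟩ := exists_associated_pow_of_mul_eq_pow' hcop hprod
  obtain ⟨y0, hy0⟩ := barlow_pow_of_assoc hpodd hd0
  obtain ⟨d1, hd1⟩ := exists_associated_pow_of_mul_eq_pow' hcop.symm
    (by rw [mul_comm]; exact hprod)
  obtain ⟨y1, hy1⟩ := barlow_pow_of_assoc hpodd hd1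
  -- y0 * y1 = -y'
  have hyy : y0 * y1 = -y' := by
    have hinj : Function.Injective (fun a : ℤ => a ^ p) :=
      (Odd.strictMono_pow (R := ℤ) hpodd).injective
    apply hinj
    simp only [mul_pow]
    rw [← hy0, ← hy1, hprod]
  -- the x + y part
  set T : ℤ := ∑ i ∈ Finset.range p, x ^ i * (-y) ^ (p - 1 - i) with hTdef
  have hgeom2 : T * (x + y) = x ^ p + y ^ p := by
    have h := geom_sum₂_mul x (-y) p
    rwa [sub_neg_eq_add, hpodd.neg_pow, sub_neg_eq_add] at h
  have hxyval : x ^ p + y ^ p = (-z) ^ p := by rw [hpodd.neg_pow]; linarith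
  have hzpne : (-z : ℤ) ^ p ≠ 0 := pow_ne_zero _ (neg_ne_zero.2 hz)
  have hxyne : x + y ≠ 0 := by
    intro h
    exact hzpne (by rw [← hxyval, ← hgeom2, h, mul_zero])
  have hcommon2 : ∀ q : ℕ, q.Prime → (q : ℤ) ∣ x + y → (q : ℤ) ∣ T →
      (q : ℤ) ∣ (p : ℤ) * x ^ (p - 1) := by
    intro q hq hq1 hq2
    have h3 : (q : ℤ) ∣ T - (p : ℤ) * x ^ (p - 1) := hq1.trans (barlow_sum_dvd x y p)
    have := dvd_sub hq2 h3
    simpa using this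
  have hcop2 : IsCoprime (x + y) T := by
    apply barlow_coprime_aux
    intro q hq hq1 hq2
    have hqZ : Prime (q : ℤ) := Nat.prime_iff_prime_int.mp hq
    rcases hqZ.dvd_mul.1 (hcommon2 q hq hq1 hq2) with h | h
    · have hqp : q = p := (Nat.prime_dvd_prime_iff_eq hq hp).1 (Int.natCast_dvd_natCast.1 h)
      rw [hqp] at hq1
      exact hpx ((dvd_add_left hpy).mp hq1)
    · have hqx : (q : ℤ) ∣ x := hqZ.dvd_of_dvd_pow h
      have hqy : (q : ℤ) ∣ y := (dvd_add_right hqx).mp hq1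
      exact hqZ.not_unit (hxy.isUnit_of_dvd' hqx hqy)
  obtain ⟨d2, hd2⟩ := exists_associated_pow_of_mul_eq_pow' hcop2
    (by rw [mul_comm]; rw [hgeom2]; exact hxyval)
  obtain ⟨z0, hz0⟩ := barlow_pow_of_assoc hpodd hd2
  -- assemble
  refine ⟨y0, y1, z0, ν, hν1, ?_, ?_, ?_, hz0⟩
  · rw [hs', hy0]
    congr 2
    omega
  · rw [← hgeom, ht', hy1]
    ring
  · have hy'' : y' = -(y0 * y1) := by rw [hyy]; ring
    rw [hy', hy'']
    ring
end
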